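/- For k a real number with k^2 > 4 and all n ≥ 0, the k-Oresme number satisfies the Binet formula A_n^{(k)} = (1/√(k²-4)) · [((k+√(k²-4))/(2k))^n − ((k−√(k²-4))/(2k))^n]. -/

import Mathlib

theorem kOresme_binet (k : ℝ) (hk : k^2 > 4) (A : ℕ → ℝ)
    (h0 : A 0 = 0) (h1 : A 1 = 1/k)
    (hrec : ∀ n : ℕ, A (n+2) = A (n+1) - (1/k^2) * A n) :
    ∀ n : ℕ, A n = (1 / Real.sqrt (k^2 - 4)) *
      (((k + Real.sqrt (k^2 - 4)) / (2*k))^n - ((k - Real.sqrt (k^2 - 4)) / (2*k))^n) := by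
  have hk0 : k ≠ 0 := by
    intro h; rw [h] at hk; norm_num at hk
  set s := Real.sqrt (k^2 - 4) with hs
  have hs2 : s^2 = k^2 - 4 := Real.sq_sqrt (by linarith)
  have hs0 : s > 0 := Real.sqrt_pos.mpr (by linarith)
  set α : ℝ := (k + s) / (2*k) with hα
  set β : ℝ := (k - s) / (2*k) with hβ
  have hqα : α^2 = α - 1/k^2 := by
    rw [hα]; field_simp; linear_combination hs2
  have hqβ : β^2 = β - 1/k^2 := by
    rw [hβ]; field_simp; linear_combination hs2
  have key : ∀ n : ℕ, A n = (1/s) * (α^n - β^n) ∧ A (n+1) = (1/s) * (α^(n+1) - β^(n+1)) := by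
    intro n
    induction n with
    | zero =>
      constructor
      · simp [h0]
      · rw [h1, pow_one, pow_one, hα, hβ]
        field_simp
        ring
    | succ n ih =>
      refine ⟨ih.2, ?_⟩
      rw [hrec n, ih.1, ih.2]
      have e1 : α^(n+2) = α^(n+1) - (1/k^2)*α^n := by
        have h : α^(n+2) = α^2 * α^n := by ring
        rw [h, hqα]; ring
      have e2 : β^(n+2) = β^(n+1) - (1/k^2)*β^n := by
        have h : β^(n+2) = β^2 * β^n := by ring
        rw [h, hqβ]; ring
      rw [e1, e2]; ring
  intro n; exact (key n).1
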